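/- arXiv:2407.16930 — 3 statements merged into one kernel-verified Lean document; each statement's English description precedes it below -/
import Mathlib

section
/- Let f : ℝ³ → ℂ be such that f and all its partial derivatives up to order N are continuous and integrable, and all partial derivatives of order N+1 are integrable. Then the inverse Fourier transform g(x) = ∫ f(k) e^{i k·x} dk/(2π)³ satisfies |g(x)| ≤ C |x|^{-(N+1)} for |x| ≥ 1 and some constant C. -/
open MeasureTheory Real FourierTransform RealInnerProductSpace

theorem fourier_decay_power_law (N : ℕ) (f : EuclideanSpace ℝ (Fin 3) → ℂ)
    (hf : ContDiff ℝ (N + 1 : ℕ) f)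
    (hint : ∀ i ≤ N + 1, Integrable (fun k => iteratedFDeriv ℝ i f k)) :
    ∃ C : ℝ, ∀ x : EuclideanSpace ℝ (Fin 3), 1 ≤ ‖x‖ →
      ‖(1 / (2 * Real.pi) ^ 3 : ℂ) •
          ∫ k, f k * Complex.exp (Complex.I * ((inner ℝ k x : ℝ) : ℂ))‖ ≤
        C / ‖x‖ ^ (N + 1) := by
  have hπ : (0:ℝ) < 2 * π := by positivity
  have hf' : ∀ (k n : ℕ), (k : ℕ∞) ≤ 0 → (n : ℕ∞) ≤ (N + 1 : ℕ) →
      Integrable (fun v : EuclideanSpace ℝ (Fin 3) ↦ ‖v‖ ^ k * ‖iteratedFDeriv ℝ n f v‖) := by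
    intro k n hk hn
    have hk0 : k = 0 := by exact_mod_cast le_antisymm hk (by positivity)
    subst hk0
    simpa using (hint n (by exact_mod_cast hn)).norm
  set B : ℝ := (2 * π) ^ 0 * (2 * ((0:ℕ):ℝ) + 2) ^ (N + 1) *
      ∑ p ∈ Finset.range (0 + 1) ×ˢ Finset.range (N + 1 + 1),
        ∫ v : EuclideanSpace ℝ (Fin 3), ‖v‖ ^ p.1 * ‖iteratedFDeriv ℝ p.2 f v‖ with hB
  refine ⟨(2 * π) ^ (N + 1) / (2 * π) ^ 3 * B, fun x hx => ?_⟩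
  set w : EuclideanSpace ℝ (Fin 3) := (-(2 * π)⁻¹) • x with hw
  have key : ‖w‖ ^ (N + 1) * ‖𝓕 f w‖ ≤ B := by
    have := Real.pow_mul_norm_iteratedFDeriv_fourier_le (K := 0) (N := (N + 1 : ℕ))
      hf hf' (le_refl (0 : ℕ∞)) (le_refl _) w
    rw [norm_iteratedFDeriv_zero] at this
    exact this
  have heq : 𝓕 f w = ∫ k, f k * Complex.exp (Complex.I * ((inner ℝ k x : ℝ) : ℂ)) := by
    rw [Real.fourier_eq']
    congr 1
    ext v
    have hi : ⟪v, w⟫ = -(2 * π)⁻¹ * ⟪v, x⟫ := by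
      rw [hw, real_inner_smul_right]
    rw [hi, show -2 * π * (-(2 * π)⁻¹ * ⟪v, x⟫) = ⟪v, x⟫ by field_simp]
    rw [smul_eq_mul, mul_comm, mul_comm Complex.I]
  rw [heq] at key
  have hwn : ‖w‖ = (2 * π)⁻¹ * ‖x‖ := by
    have h1 : ‖(-(2 * π)⁻¹ : ℝ)‖ = (2 * π)⁻¹ := by
      rw [Real.norm_eq_abs, abs_neg, abs_of_pos (inv_pos.mpr hπ)]
    rw [hw, norm_smul, h1]
  rw [hwn] at key
  have hxpos : (0:ℝ) < ‖x‖ ^ (N + 1) := by positivity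
  have hnc : ‖(1 / (2 * (π:ℂ)) ^ 3 : ℂ)‖ = 1 / (2 * π) ^ 3 := by
    rw [show (1 / (2 * (π:ℂ)) ^ 3 : ℂ) = ((1 / (2 * π) ^ 3 : ℝ) : ℂ) by push_cast; ring]
    rw [Complex.norm_real, Real.norm_eq_abs, abs_of_pos (by positivity)]
  rw [norm_smul, hnc, le_div_iff₀ hxpos]
  set I : ℝ := ‖∫ k, f k * Complex.exp (Complex.I * ((inner ℝ k x : ℝ) : ℂ))‖ with hI
  have hkey : ((2 * π)⁻¹) ^ (N + 1) * ‖x‖ ^ (N + 1) * I ≤ B := by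
    rw [← mul_pow]; exact key
  calc 1 / (2 * π) ^ 3 * I * ‖x‖ ^ (N + 1)
      = (2 * π) ^ (N + 1) / (2 * π) ^ 3 * (((2 * π)⁻¹) ^ (N + 1) * ‖x‖ ^ (N + 1) * I) := by
        rw [inv_pow]
        field_simp
    _ ≤ (2 * π) ^ (N + 1) / (2 * π) ^ 3 * B :=
        mul_le_mul_of_nonneg_left hkey (by positivity)
end

section
/- Let F : ℝ → ℂ be continuous, periodic considerations aside, and suppose F is integrable on ℝ with integrable Fourier transform. If F is N-times continuously differentiable with all derivatives up to order N integrable and derivative of order N+1 integrable, then |(1/L) Σ_{n∈ℤ} F(2πn/L) − (1/(2π)) ∫_ℝ F(k) dk| ≤ C/L^{N+1} for L ≥ 1 and some constant C. -/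
open MeasureTheory

set_option linter.unusedVariables false
set_option linter.unusedSectionVars false

open Set Function

section PoissonAux

variable {E : Type*} [NormedAddCommGroup E] [NormedSpace ℝ E]

noncomputable def Ah (h : ℝ) (f : ℝ → E) (x : ℝ) : E := h⁻¹ • ∫ t in Set.Ioc x (x+h), f t

variable [CompleteSpace E] {h : ℝ}

lemma cells_cover {h : ℝ} (hh : 0 < h) : (⋃ n : ℤ, Set.Ioc ((n:ℝ)*h) ((n+1)*h)) = Set.univ := by
  ext x
  simp only [Set.mem_iUnion, Set.mem_Ioc, Set.mem_univ, iff_true]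
  refine ⟨⌈x/h⌉ - 1, ?_, ?_⟩
  · push_cast
    have h2 : (⌈x/h⌉ : ℝ) < x/h + 1 := Int.ceil_lt_add_one (x/h)
    have h3 : ((⌈x/h⌉:ℝ) - 1) * h < (x/h) * h := by nlinarith
    calc ((⌈x/h⌉:ℝ) - 1) * h < (x/h)*h := h3
    _ = x := by field_simp
  · push_cast
    have h1 : x/h ≤ (⌈x/h⌉ : ℝ) := Int.le_ceil _
    calc x = (x/h)*h := by field_simp
    _ ≤ ((⌈x/h⌉:ℝ) - 1 + 1)*h := by nlinarith
    _ = _ := by ring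

lemma cells_disj {h : ℝ} (hh : 0 < h) :
    Pairwise (Function.onFun Disjoint fun n : ℤ => Set.Ioc ((n:ℝ)*h) ((n+1)*h)) := by
  intro i j hij
  rw [Function.onFun, Set.Ioc_disjoint_Ioc]
  rcases lt_or_gt_of_ne hij with hlt | hlt
  · have : (i:ℝ) + 1 ≤ j := by exact_mod_cast hlt
    have : ((i:ℝ)+1)*h ≤ (j:ℝ)*h := by nlinarith
    calc min (((i:ℝ)+1)*h) (((j:ℝ)+1)*h) ≤ ((i:ℝ)+1)*h := min_le_left _ _
    _ ≤ (j:ℝ)*h := this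
    _ ≤ max ((i:ℝ)*h) ((j:ℝ)*h) := le_max_right _ _
  · have : (j:ℝ) + 1 ≤ i := by exact_mod_cast hlt
    have : ((j:ℝ)+1)*h ≤ (i:ℝ)*h := by nlinarith
    calc min (((i:ℝ)+1)*h) (((j:ℝ)+1)*h) ≤ ((j:ℝ)+1)*h := min_le_right _ _
    _ ≤ (i:ℝ)*h := this
    _ ≤ max ((i:ℝ)*h) ((j:ℝ)*h) := le_max_left _ _

lemma hasSum_cells [CompleteSpace E] {h : ℝ} (hh : 0 < h) {f : ℝ → E} (hf : Integrable f) :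
    HasSum (fun n : ℤ => ∫ t in Set.Ioc ((n:ℝ)*h) ((n+1)*h), f t) (∫ t, f t) := by
  have := hasSum_integral_iUnion (μ := volume) (f := f)
    (fun n : ℤ => measurableSet_Ioc) (cells_disj hh) (by rw [cells_cover hh]; exact hf.integrableOn)
  rwa [cells_cover hh, setIntegral_univ] at this

lemma prod_int {h : ℝ} (hh : 0 < h) {f : ℝ → E} (hc : Continuous f) (hf : Integrable f) :
    Integrable (fun p : ℝ × ℝ => f (p.2 + p.1)) ((volume.restrict (Set.Ioc 0 h)).prod volume) := by
  rw [integrable_prod_iff]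
  · constructor
    · refine Filter.Eventually.of_forall (fun s => ?_)
      exact (measurePreserving_add_right volume s).integrable_comp_emb
        (measurableEmbedding_addRight s) |>.2 hf
    · have : ∀ s : ℝ, ∫ x, ‖f (x + s)‖ = ∫ x, ‖f x‖ := fun s =>
        integral_add_right_eq_self (fun x => ‖f x‖) s
      simp only [this]
      exact integrable_const _
  · exact (hc.comp (continuous_snd.add continuous_fst)).aestronglyMeasurable

lemma inner_sub {h : ℝ} (hh : 0 < h) {f : ℝ → E} (hc : Continuous f) (x : ℝ) :
    ∫ t in Set.Ioc x (x+h), f t = ∫ s in Set.Ioc 0 h, f (s + x) := by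
  rw [← intervalIntegral.integral_of_le (by linarith : x ≤ x + h),
      ← intervalIntegral.integral_of_le hh.le,
      intervalIntegral.integral_comp_add_right (fun t => f t) x]
  rw [zero_add, add_comm h x]

lemma integrable_Ah {h : ℝ} (hh : 0 < h) {f : ℝ → E} (hc : Continuous f) (hf : Integrable f) :
    Integrable (fun x => ∫ t in Set.Ioc x (x+h), f t) := by
  have := (prod_int hh hc hf).integral_prod_right
  refine this.congr (Filter.Eventually.of_forall (fun x => ?_))
  simp only
  rw [inner_sub hh hc x]
  simp only [add_comm]

lemma integral_Ah [CompleteSpace E] {h : ℝ} (hh : 0 < h) {f : ℝ → E} (hc : Continuous f)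
    (hf : Integrable f) :
    ∫ x, (∫ t in Set.Ioc x (x+h), f t) = h • ∫ t, f t := by
  have swap := integral_integral_swap (μ := volume.restrict (Set.Ioc 0 h)) (ν := volume)
    (f := fun s x => f (x + s)) (prod_int hh hc hf)
  have inner : ∀ s : ℝ, ∫ x, f (x + s) = ∫ t, f t := fun s =>
    integral_add_right_eq_self f s
  simp only [inner] at swap
  rw [integral_const] at swap
  calc ∫ x, (∫ t in Set.Ioc x (x+h), f t) = ∫ x, ∫ s in Set.Ioc 0 h, f (s + x) := by
        simp only [inner_sub hh hc]
  _ = ∫ x, ∫ s in Set.Ioc 0 h, f (x + s) := by simp only [add_comm]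
  _ = (volume.restrict (Set.Ioc 0 h) Set.univ).toReal • ∫ t, f t := swap.symm
  _ = h • ∫ t, f t := by
        rw [Measure.restrict_apply_univ, Real.volume_Ioc]
        norm_num [ENNReal.toReal_ofReal hh.le]

lemma hasDerivAt_cellint [CompleteSpace E] {h : ℝ} (hh : 0 < h) {f : ℝ → E} (hc : Continuous f)
    (x : ℝ) :
    HasDerivAt (fun y => ∫ t in Set.Ioc y (y+h), f t) (f (x+h) - f x) x := by
  have key : ∀ y : ℝ, ∫ t in Set.Ioc y (y+h), f t =
      (∫ t in (0:ℝ)..(y+h), f t) - ∫ t in (0:ℝ)..y, f t := by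
    intro y
    rw [← intervalIntegral.integral_of_le (by linarith : y ≤ y + h)]
    rw [← intervalIntegral.integral_add_adjacent_intervals
      (hc.intervalIntegrable 0 y) (hc.intervalIntegrable y (y+h))]
    abel
  simp only [key]
  have h1 : HasDerivAt (fun y => ∫ t in (0:ℝ)..y, f t) (f x) x :=
    (hc.integral_hasStrictDerivAt 0 x).hasDerivAt
  have h2 : HasDerivAt (fun y => ∫ t in (0:ℝ)..(y+h), f t) (f (x+h)) x := by
    have := (hc.integral_hasStrictDerivAt 0 (x+h)).hasDerivAt
    simpa using this.comp_add_const x h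
  exact h2.sub h1

lemma hasDerivAt_Ah_aux (hh : 0 < h) {f : ℝ → E} (hc : Continuous f) (x : ℝ) :
    HasDerivAt (Ah h f) (h⁻¹ • (f (x+h) - f x)) x :=
  (hasDerivAt_cellint hh hc x).const_smul h⁻¹

lemma continuous_Ah (hh : 0 < h) {f : ℝ → E} (hc : Continuous f) : Continuous (Ah h f) := by
  have : Differentiable ℝ (Ah h f) := fun x => (hasDerivAt_Ah_aux hh hc x).differentiableAt
  exact this.continuous

lemma hasDerivAt_Ah (hh : 0 < h) {f : ℝ → E} (hd : Differentiable ℝ f)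
    (hc : Continuous (deriv f)) (x : ℝ) :
    HasDerivAt (Ah h f) (Ah h (deriv f) x) x := by
  have ftc : ∫ t in Set.Ioc x (x+h), deriv f t = f (x+h) - f x := by
    rw [← intervalIntegral.integral_of_le (by linarith : x ≤ x + h)]
    exact intervalIntegral.integral_deriv_eq_sub (fun y _ => hd y) (hc.intervalIntegrable _ _)
  have key := hasDerivAt_Ah_aux hh (hd.continuous) x
  rw [show Ah h (deriv f) x = h⁻¹ • (f (x+h) - f x) by rw [Ah, ftc]]
  exact key

lemma deriv_Ah (hh : 0 < h) {f : ℝ → E} (hd : Differentiable ℝ f) (hc : Continuous (deriv f)) :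
    deriv (Ah h f) = Ah h (deriv f) := funext fun x => (hasDerivAt_Ah hh hd hc x).deriv

lemma cast_succ_eq (k : ℕ) : ((k+1 : ℕ) : WithTop ℕ∞) = (k : WithTop ℕ∞) + 1 := by
  push_cast; rfl

lemma contDiff_Ah (hh : 0 < h) {f : ℝ → E} : ∀ (k : ℕ), ContDiff ℝ k f → ContDiff ℝ k (Ah h f) := by
  intro k
  induction k generalizing f with
  | zero => intro hf; exact contDiff_zero.2 (continuous_Ah hh hf.continuous)
  | succ k ih =>
    intro hf
    rw [cast_succ_eq, contDiff_succ_iff_deriv] at hf ⊢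
    obtain ⟨hdiff, -, hder⟩ := hf
    have hdc : Continuous (deriv f) := hder.continuous
    refine ⟨fun x => (hasDerivAt_Ah hh hdiff hdc x).differentiableAt, by simp, ?_⟩
    rw [deriv_Ah hh hdiff hdc]
    exact ih hder

lemma iteratedDeriv_Ah (hh : 0 < h) {f : ℝ → E} : ∀ (i : ℕ), ContDiff ℝ i f →
    iteratedDeriv i (Ah h f) = Ah h (iteratedDeriv i f) := by
  intro i
  induction i generalizing f with
  | zero => intro _; simp [iteratedDeriv_zero]
  | succ i ih =>
    intro hf
    rw [cast_succ_eq, contDiff_succ_iff_deriv] at hf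
    obtain ⟨hdiff, -, h1⟩ := hf
    rw [iteratedDeriv_succ', iteratedDeriv_succ', deriv_Ah hh hdiff h1.continuous, ih h1]

lemma ftc_bound {f : ℝ → E} (hd : Differentiable ℝ f) (hc : Continuous (deriv f))
    {a b x : ℝ} (hab : a ≤ b) (hx : x ∈ Set.Icc a b) :
    ‖f x - f a‖ ≤ ∫ t in Set.Ioc a b, ‖deriv f t‖ := by
  have e1 : f x - f a = ∫ t in a..x, deriv f t :=
    (intervalIntegral.integral_deriv_eq_sub (fun y _ => hd y) (hc.intervalIntegrable _ _)).symm
  rw [e1]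
  calc ‖∫ t in a..x, deriv f t‖ ≤ ∫ t in Set.Ioc a x, ‖deriv f t‖ := by
        rw [intervalIntegral.integral_of_le hx.1]
        exact norm_integral_le_integral_norm _
  _ ≤ ∫ t in Set.Ioc a b, ‖deriv f t‖ := by
        apply setIntegral_mono_set (hc.norm.integrableOn_Ioc)
          (Filter.Eventually.of_forall (fun t => norm_nonneg _))
        exact Filter.Eventually.of_forall (Set.Ioc_subset_Ioc_right hx.2) |>.mono (by tauto)

lemma cell_norm_bound (hh : 0 < h) {f : ℝ → E} (hd : Differentiable ℝ f)
    (hc : Continuous (deriv f)) (n : ℤ) {x : ℝ}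
    (hx : x ∈ Set.Ioc ((n:ℝ)*h) ((n+1)*h)) :
    ‖f ((n:ℝ)*h) - f x‖ ≤ ∫ t in Set.Ioc ((n:ℝ)*h) ((n+1)*h), ‖deriv f t‖ := by
  rw [norm_sub_rev]
  exact ftc_bound hd hc (by nlinarith) ⟨hx.1.le, hx.2⟩

lemma summable_cells (hh : 0 < h) {f : ℝ → E} (hd : Differentiable ℝ f)
    (hc : Continuous (deriv f)) (hfi : Integrable f) (hfi' : Integrable (deriv f)) :
    Summable (fun n : ℤ => f ((n:ℝ)*h)) := by
  have hs1 : Summable (fun n : ℤ => ∫ t in Set.Ioc ((n:ℝ)*h) ((n+1)*h), ‖f t‖) :=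
    (hasSum_cells hh hfi.norm).summable
  have hs2 : Summable (fun n : ℤ => ∫ t in Set.Ioc ((n:ℝ)*h) ((n+1)*h), ‖deriv f t‖) :=
    (hasSum_cells hh hfi'.norm).summable
  apply Summable.of_norm
  apply Summable.of_nonneg_of_le (fun n => norm_nonneg _)
    (fun n => ?_) (((hs1.mul_left h⁻¹).add hs2))
  set In := Set.Ioc ((n:ℝ)*h) ((n+1)*h)
  have hIn : (volume In).toReal = h := by
    rw [Real.volume_Ioc]
    rw [show ((n:ℝ)+1)*h - (n:ℝ)*h = h by ring, ENNReal.toReal_ofReal hh.le]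
  have key : h * ‖f ((n:ℝ)*h)‖ ≤
      (∫ t in In, ‖f t‖) + h * ∫ t in In, ‖deriv f t‖ := by
    have e1 : ∫ (_ : ℝ) in In, ‖f ((n:ℝ)*h)‖ = h * ‖f ((n:ℝ)*h)‖ := by
      rw [setIntegral_const, measureReal_def, hIn, smul_eq_mul]
    rw [← e1]
    have e2 : ∫ (_ : ℝ) in In, (∫ t in In, ‖deriv f t‖) = h * ∫ t in In, ‖deriv f t‖ := by
      rw [setIntegral_const, measureReal_def, hIn, smul_eq_mul]
    rw [← e2, ← integral_add (hfi.norm.integrableOn) (integrableOn_const ?_)]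
    · apply setIntegral_mono_on
      · exact integrableOn_const (by rw [Real.volume_Ioc]; exact ENNReal.ofReal_ne_top)
      · exact (hfi.norm.integrableOn.add (integrableOn_const
          (by rw [Real.volume_Ioc]; exact ENNReal.ofReal_ne_top)))
      · exact measurableSet_Ioc
      · intro x hx
        calc ‖f ((n:ℝ)*h)‖ ≤ ‖f x‖ + ‖f ((n:ℝ)*h) - f x‖ := by
              have := norm_add_le (f x) (f ((n:ℝ)*h) - f x); simpa using this
        _ ≤ ‖f x‖ + ∫ t in In, ‖deriv f t‖ := by
              have := cell_norm_bound hh hd hc n hx; linarith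
    · rw [Real.volume_Ioc]; exact ENNReal.ofReal_ne_top
  have hb : ‖f ((n:ℝ)*h)‖ ≤ h⁻¹ * (∫ t in In, ‖f t‖) + ∫ t in In, ‖deriv f t‖ := by
    rw [← mul_le_mul_iff_right₀ hh]
    calc h * ‖f ((n:ℝ)*h)‖ ≤ (∫ t in In, ‖f t‖) + h * ∫ t in In, ‖deriv f t‖ := key
    _ = h * (h⁻¹ * (∫ t in In, ‖f t‖) + ∫ t in In, ‖deriv f t‖) := by field_simp
  simpa using hb

lemma vol_cell (hh : 0 < h) (n : ℤ) :
    (volume (Set.Ioc ((n:ℝ)*h) ((n+1)*h))).toReal = h := by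
  rw [Real.volume_Ioc, show ((n:ℝ)+1)*h - (n:ℝ)*h = h by ring, ENNReal.toReal_ofReal hh.le]

lemma base_case (hh : 0 < h) {f : ℝ → E} (hd : Differentiable ℝ f)
    (hc : Continuous (deriv f)) (hfi : Integrable f) (hfi' : Integrable (deriv f)) :
    ‖h • (∑' n : ℤ, f ((n:ℝ)*h)) - ∫ x, f x‖ ≤ h * ∫ x, ‖deriv f x‖ := by
  set In := fun n : ℤ => Set.Ioc ((n:ℝ)*h) ((n+1)*h) with hIn
  set c := fun n : ℤ => ∫ t in In n, ‖deriv f t‖ with hc'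
  have hcell : ∀ n : ℤ, ‖h • f ((n:ℝ)*h) - ∫ t in In n, f t‖ ≤ h * c n := by
    intro n
    have hconst : ∫ (_ : ℝ) in In n, f ((n:ℝ)*h) = h • f ((n:ℝ)*h) := by
      rw [setIntegral_const, measureReal_def, vol_cell hh n]
    have hfin : Integrable (fun x : ℝ => f ((n:ℝ)*h)) (volume.restrict (In n)) := by
      apply integrable_const_iff.2; right
      exact ⟨by rw [Measure.restrict_apply_univ, Real.volume_Ioc]; exact ENNReal.ofReal_lt_top⟩
    have e1 : h • f ((n:ℝ)*h) - ∫ t in In n, f t = ∫ t in In n, (f ((n:ℝ)*h) - f t) := by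
      rw [integral_sub hfin hfi.integrableOn, hconst]
    rw [e1]
    calc ‖∫ t in In n, (f ((n:ℝ)*h) - f t)‖ ≤ ∫ t in In n, ‖f ((n:ℝ)*h) - f t‖ :=
          norm_integral_le_integral_norm _
    _ ≤ ∫ (_ : ℝ) in In n, c n := by
        apply setIntegral_mono_on
        · exact (hfin.sub hfi.integrableOn).norm
        · exact integrable_const_iff.2 (Or.inr ⟨by
            rw [Measure.restrict_apply_univ, Real.volume_Ioc]; exact ENNReal.ofReal_lt_top⟩)
        · exact measurableSet_Ioc
        · intro x hx; exact cell_norm_bound hh hd hc n hx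
    _ = h * c n := by rw [setIntegral_const, measureReal_def, vol_cell hh n, smul_eq_mul]
  -- summability facts
  have hsum_f : Summable (fun n : ℤ => f ((n:ℝ)*h)) := summable_cells hh hd hc hfi hfi'
  have hsum_cells : HasSum (fun n : ℤ => ∫ t in In n, f t) (∫ t, f t) := hasSum_cells hh hfi
  have hsum_c : HasSum c (∫ t, ‖deriv f t‖) := hasSum_cells hh hfi'.norm
  have e2 : h • (∑' n : ℤ, f ((n:ℝ)*h)) - ∫ x, f x
      = ∑' n : ℤ, (h • f ((n:ℝ)*h) - ∫ t in In n, f t) := by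
    rw [Summable.tsum_sub (hsum_f.const_smul h) hsum_cells.summable,
      (hsum_f.hasSum.const_smul h).tsum_eq, hsum_cells.tsum_eq]
  rw [e2]
  have hsumdiff : Summable (fun n : ℤ => ‖h • f ((n:ℝ)*h) - ∫ t in In n, f t‖) := by
    apply Summable.of_nonneg_of_le (fun n => norm_nonneg _) hcell (hsum_c.summable.mul_left h)
  calc ‖∑' n : ℤ, (h • f ((n:ℝ)*h) - ∫ t in In n, f t)‖
      ≤ ∑' n : ℤ, ‖h • f ((n:ℝ)*h) - ∫ t in In n, f t‖ := norm_tsum_le_tsum_norm hsumdiff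
  _ ≤ ∑' n : ℤ, h * c n := Summable.tsum_le_tsum hcell hsumdiff (hsum_c.summable.mul_left h)
  _ = h * ∫ x, ‖deriv f x‖ := by rw [(hsum_c.mul_left h).tsum_eq]

lemma integrable_Ah2 (hh : 0 < h) {f : ℝ → E} (hc : Continuous f) (hf : Integrable f) :
    Integrable (Ah h f) := ((integrable_Ah hh hc hf).smul h⁻¹).congr
      (Filter.Eventually.of_forall fun x => rfl)

lemma integral_Ah2 (hh : 0 < h) {f : ℝ → E} (hc : Continuous f) (hf : Integrable f) :
    ∫ x, Ah h f x = ∫ t, f t := by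
  simp only [Ah]
  rw [integral_smul, integral_Ah hh hc hf, smul_smul, inv_mul_cancel₀ hh.ne', one_smul]

lemma vol_Ioch (hh : 0 < h) (x : ℝ) : (volume (Set.Ioc x (x+h))).toReal = h := by
  rw [Real.volume_Ioc, show x + h - x = h by ring, ENNReal.toReal_ofReal hh.le]

lemma sub_Ah_bound (hh : 0 < h) {f : ℝ → E} (hd : Differentiable ℝ f)
    (hc : Continuous (deriv f)) (x : ℝ) :
    ‖f x - Ah h f x‖ ≤ ∫ t in Set.Ioc x (x+h), ‖deriv f t‖ := by
  have hvol : volume (Set.Ioc x (x+h)) < ⊤ := by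
    rw [Real.volume_Ioc]; exact ENNReal.ofReal_lt_top
  have hfint : IntegrableOn f (Set.Ioc x (x+h)) :=
    hd.continuous.integrableOn_Ioc
  have hconstint : Integrable (fun _ : ℝ => f x) (volume.restrict (Set.Ioc x (x+h))) :=
    integrable_const_iff.2 (Or.inr ⟨by rwa [Measure.restrict_apply_univ]⟩)
  have e1 : f x - Ah h f x = h⁻¹ • ∫ s in Set.Ioc x (x+h), (f x - f s) := by
    rw [integral_sub hconstint hfint, setIntegral_const, measureReal_def, vol_Ioch hh x, Ah, smul_sub, smul_smul,
      inv_mul_cancel₀ hh.ne', one_smul]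
  rw [e1, norm_smul]
  have hb : ‖∫ s in Set.Ioc x (x+h), (f x - f s)‖
      ≤ h * ∫ t in Set.Ioc x (x+h), ‖deriv f t‖ := by
    calc ‖∫ s in Set.Ioc x (x+h), (f x - f s)‖ ≤ ∫ s in Set.Ioc x (x+h), ‖f x - f s‖ :=
          norm_integral_le_integral_norm _
    _ ≤ ∫ (_ : ℝ) in Set.Ioc x (x+h), (∫ t in Set.Ioc x (x+h), ‖deriv f t‖) := by
        apply setIntegral_mono_on
        · exact (hconstint.sub hfint).norm
        · exact integrable_const_iff.2 (Or.inr ⟨by rwa [Measure.restrict_apply_univ]⟩)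
        · exact measurableSet_Ioc
        · intro s hs
          rw [norm_sub_rev]
          exact ftc_bound hd hc (by linarith) ⟨hs.1.le, hs.2⟩
    _ = h * ∫ t in Set.Ioc x (x+h), ‖deriv f t‖ := by
        rw [setIntegral_const, measureReal_def, vol_Ioch hh x, smul_eq_mul]
  calc ‖h⁻¹‖ * ‖∫ s in Set.Ioc x (x+h), (f x - f s)‖
      ≤ h⁻¹ * (h * ∫ t in Set.Ioc x (x+h), ‖deriv f t‖) := by
        rw [Real.norm_eq_abs, abs_of_pos (inv_pos.2 hh)]
        exact mul_le_mul_of_nonneg_left hb (inv_pos.2 hh).le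
  _ = ∫ t in Set.Ioc x (x+h), ‖deriv f t‖ := by field_simp

lemma int_sub_Ah (hh : 0 < h) {f : ℝ → E} (hd : Differentiable ℝ f)
    (hc : Continuous (deriv f)) (hfi : Integrable f) (hfi' : Integrable (deriv f)) :
    ∫ x, ‖f x - Ah h f x‖ ≤ h * ∫ x, ‖deriv f x‖ := by
  have hAhint : Integrable (Ah h f) := integrable_Ah2 hh hd.continuous hfi
  have hrhsint : Integrable (fun x => ∫ t in Set.Ioc x (x+h), ‖deriv f t‖) :=
    integrable_Ah hh hc.norm hfi'.norm
  calc ∫ x, ‖f x - Ah h f x‖ ≤ ∫ x, (∫ t in Set.Ioc x (x+h), ‖deriv f t‖) := by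
        apply integral_mono ((hfi.sub hAhint).norm) hrhsint
        intro x; exact sub_Ah_bound hh hd hc x
  _ = h * ∫ x, ‖deriv f x‖ := by
        rw [integral_Ah hh hc.norm hfi'.norm, smul_eq_mul]

lemma iteratedDeriv_sub' {i : ℕ} {f g : ℝ → E} (hf : ContDiff ℝ i f) (hg : ContDiff ℝ i g) :
    iteratedDeriv i (f - g) = iteratedDeriv i f - iteratedDeriv i g := by
  funext x
  have := iteratedDerivWithin_sub (𝕜 := ℝ) (n := i) (s := Set.univ) (x := x)
    (Set.mem_univ x) uniqueDiffOn_univ hf.contDiffWithinAt hg.contDiffWithinAt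
  simpa [iteratedDerivWithin_univ] using this

lemma key_estimate : ∀ (m : ℕ) {h : ℝ}, 0 < h → ∀ (f : ℝ → E), ContDiff ℝ (m+1 : ℕ) f →
    (∀ i ≤ m+1, Integrable (iteratedDeriv i f)) →
    ‖h • (∑' n : ℤ, f ((n:ℝ)*h)) - ∫ x, f x‖ ≤ h^(m+1) * ∫ x, ‖iteratedDeriv (m+1) f x‖ := by
  intro m
  induction m with
  | zero =>
    intro h hh f hf hint
    have hd : Differentiable ℝ f := hf.differentiable (by simp)
    have hc : Continuous (deriv f) := by
      have := hf.continuous_iteratedDeriv 1 (by exact_mod_cast Nat.le_refl 1)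
      rwa [iteratedDeriv_one] at this
    have := base_case hh hd hc (by simpa using hint 0 (by norm_num))
      (by have := hint 1 (by norm_num); rwa [iteratedDeriv_one] at this)
    simpa [iteratedDeriv_one] using this
  | succ m ih =>
    intro h hh f hf hint
    -- notation
    have hf1 : ContDiff ℝ (m+1 : ℕ) f := hf.of_le (by exact_mod_cast Nat.le_succ (m+1))
    have hcf : Continuous f := hf.continuous
    have hfi : Integrable f := by simpa using hint 0 (by omega)
    have hderiv1 : deriv f = iteratedDeriv 1 f := iteratedDeriv_one.symm
    have hd : Differentiable ℝ f := hf.differentiable (by simp)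
    have hc1 : Continuous (deriv f) := by
      rw [hderiv1]; exact hf.continuous_iteratedDeriv 1 (by exact_mod_cast (by omega : 1 ≤ m+2))
    have hfi1 : Integrable (deriv f) := by
      rw [hderiv1]; exact hint 1 (by omega)
    set u : ℝ → E := Ah h f with hu
    set g : ℝ → E := f - u with hg
    have hcd_u : ContDiff ℝ (m+2 : ℕ) u := contDiff_Ah hh (m+2) hf
    have hcd_g : ContDiff ℝ (m+2 : ℕ) g := hf.sub hcd_u
    -- iterated derivatives of g
    have hiter : ∀ i : ℕ, i ≤ m+2 → iteratedDeriv i g =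
        iteratedDeriv i f - Ah h (iteratedDeriv i f) := by
      intro i hi
      have hfi' : ContDiff ℝ (i : ℕ) f := hf.of_le (by exact_mod_cast hi)
      rw [hg, iteratedDeriv_sub' hfi' (contDiff_Ah hh i hfi'), iteratedDeriv_Ah hh i hfi']
    have hint_iter : ∀ i : ℕ, i ≤ m+2 → Integrable (iteratedDeriv i f) := hint
    have hcont_iter : ∀ i : ℕ, i ≤ m+2 → Continuous (iteratedDeriv i f) := fun i hi =>
      hf.continuous_iteratedDeriv i (by exact_mod_cast hi)
    have hint_g : ∀ i ≤ m+1, Integrable (iteratedDeriv i g) := by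
      intro i hi
      rw [hiter i (by omega)]
      exact (hint i (by omega)).sub
        (integrable_Ah2 hh (hcont_iter i (by omega)) (hint i (by omega)))
    -- sum identities
    have hsum_f : Summable (fun n : ℤ => f ((n:ℝ)*h)) := summable_cells hh hd hc1 hfi hfi1
    have hsum_u : HasSum (fun n : ℤ => u ((n:ℝ)*h)) (h⁻¹ • ∫ t, f t) := by
      have base := (hasSum_cells hh hfi).const_smul (h⁻¹)
      refine base.congr_fun fun n => ?_
      rw [hu]
      simp only [Ah]
      rw [show (n:ℝ)*h + h = ((n:ℝ)+1)*h by ring]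
    have hint_u : Integrable u := integrable_Ah2 hh hcf hfi
    have hint_gI : Integrable g := hfi.sub hint_u
    have hInt_u : ∫ x, u x = ∫ x, f x := integral_Ah2 hh hcf hfi
    have eqsum : h • (∑' n : ℤ, g ((n:ℝ)*h)) - ∫ x, g x
        = h • (∑' n : ℤ, f ((n:ℝ)*h)) - ∫ x, f x := by
      have hgn : ∀ n : ℤ, g ((n:ℝ)*h) = f ((n:ℝ)*h) - u ((n:ℝ)*h) := fun n => rfl
      have : (∑' n : ℤ, g ((n:ℝ)*h)) = (∑' n : ℤ, f ((n:ℝ)*h)) - ∑' n : ℤ, u ((n:ℝ)*h) := by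
        simp only [hgn]
        exact Summable.tsum_sub hsum_f hsum_u.summable
      have hgint : ∫ x, g x = (∫ x, f x) - ∫ x, u x := by
        simp only [hg, Pi.sub_apply]
        exact integral_sub hfi hint_u
      rw [this, hsum_u.tsum_eq, hgint, hInt_u, smul_sub, smul_smul,
        mul_inv_cancel₀ hh.ne', one_smul]
      abel
    -- apply induction hypothesis to g
    have ihg := ih hh g (hcd_g.of_le (by exact_mod_cast Nat.le_succ (m+1))) hint_g
    rw [eqsum] at ihg
    -- estimate the top derivative of g
    set w : ℝ → E := iteratedDeriv (m+1) f with hw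
    have hw_diff : Differentiable ℝ w :=
      hf.differentiable_iteratedDeriv (m+1) (by exact_mod_cast Nat.lt_succ_self (m+1))
    have hw_deriv : deriv w = iteratedDeriv (m+2) f := by
      rw [hw, ← iteratedDeriv_succ]
    have hw_dc : Continuous (deriv w) := by
      rw [hw_deriv]; exact hcont_iter (m+2) (le_refl _)
    have hw_int : Integrable w := hint (m+1) (by omega)
    have hw_dint : Integrable (deriv w) := by rw [hw_deriv]; exact hint (m+2) (le_refl _)
    have top : ∫ x, ‖iteratedDeriv (m+1) g x‖ ≤ h * ∫ x, ‖iteratedDeriv (m+2) f x‖ := by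
      rw [hiter (m+1) (by omega)]
      have := int_sub_Ah hh hw_diff hw_dc hw_int hw_dint
      rw [hw_deriv] at this
      simpa using this
    calc ‖h • (∑' n : ℤ, f ((n:ℝ)*h)) - ∫ x, f x‖
        ≤ h^(m+1) * ∫ x, ‖iteratedDeriv (m+1) g x‖ := ihg
    _ ≤ h^(m+1) * (h * ∫ x, ‖iteratedDeriv (m+2) f x‖) :=
        mul_le_mul_of_nonneg_left top (by positivity)
    _ = h^(m+2) * ∫ x, ‖iteratedDeriv (m+2) f x‖ := by ring

theorem poisson_summation_power_law (N : ℕ) (F : ℝ → ℂ)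
    (hF : ContDiff ℝ (N + 1 : ℕ) F) (hF_int : Integrable F)
    (hint : ∀ i ≤ N + 1, Integrable (iteratedDeriv i F))
    (hfour : Integrable (FourierTransform.fourier F)) :
    ∃ C : ℝ, ∀ L : ℝ, 1 ≤ L →
      ‖(1 / (L : ℂ)) * ∑' n : ℤ, F (2 * Real.pi * n / L) -
          (1 / (2 * Real.pi) : ℂ) * ∫ k, F k‖ ≤ C / L ^ (N + 1) := by
  set M := ∫ x, ‖iteratedDeriv (N+1) F x‖ with hM
  have hMnonneg : 0 ≤ M := integral_nonneg (fun x => norm_nonneg _)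
  refine ⟨(2*Real.pi)^N * M, fun L hL => ?_⟩
  have hL0 : (0:ℝ) < L := lt_of_lt_of_le one_pos hL
  have hpi := Real.pi_pos
  set h : ℝ := 2*Real.pi/L with hdef
  have hh : 0 < h := by positivity
  have key := key_estimate N hh F hF hint
  have heq : (1 / (L : ℂ)) * ∑' n : ℤ, F (2 * Real.pi * n / L) -
      (1 / (2 * Real.pi) : ℂ) * ∫ k, F k
      = (1 / (2 * Real.pi) : ℂ) * (h • (∑' n : ℤ, F ((n:ℝ)*h)) - ∫ x, F x) := by
    have hts : ∑' n : ℤ, F (2 * Real.pi * n / L) = ∑' n : ℤ, F ((n:ℝ)*h) := by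
      congr 1; funext n; congr 1; rw [hdef]; ring
    rw [hts, mul_sub]
    congr 1
    rw [Complex.real_smul, ← mul_assoc]
    congr 1
    rw [hdef]
    push_cast
    have hLne : (L:ℂ) ≠ 0 := by exact_mod_cast hL0.ne'
    have hpine : ((Real.pi:ℂ)) ≠ 0 := by exact_mod_cast hpi.ne'
    field_simp
  rw [heq, norm_mul]
  have hnorm1 : ‖(1 / (2 * Real.pi) : ℂ)‖ = 1/(2*Real.pi) := by
    rw [norm_div, norm_one]
    rw [show ((2 * Real.pi : ℂ)) = ((2*Real.pi : ℝ) : ℂ) by push_cast; ring]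
    rw [Complex.norm_real, Real.norm_eq_abs, abs_of_pos (by positivity)]
  rw [hnorm1]
  calc (1/(2*Real.pi)) * ‖h • (∑' n : ℤ, F ((n:ℝ)*h)) - ∫ x, F x‖
      ≤ (1/(2*Real.pi)) * (h^(N+1) * M) := by
        apply mul_le_mul_of_nonneg_left key (by positivity)
  _ = (2*Real.pi)^N * M / L^(N+1) := by
      rw [hdef, div_pow]
      field_simp
      ring

end PoissonAux
end

section
/- Suppose F : ℝ → ℂ extends to a function analytic on the strip |Im ζ| < a (a > 0), integrable on every horizontal line |Im ζ| = b with b < a, with uniform bound on these integrals. Then for every 0 < b < a there is C such that |(1/L) Σ_{n∈ℤ} F(2πn/L) − (1/(2π)) ∫_ℝ F(k) dk| ≤ C e^{−bL} for all L ≥ 1. -/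
open MeasureTheory

open MeasureTheory Filter Set

namespace PSEaux

lemma exists_escape_seq {s : ℝ → ℝ} (hs : Integrable s) (h0 : ∀ x, 0 ≤ s x) :
    ∃ R : ℕ → ℝ, Tendsto R atTop atTop ∧ Tendsto (fun j => s (R j)) atTop (nhds 0) := by
  have key : ∀ n : ℕ, ∃ x : ℝ, (n : ℝ) ≤ x ∧ s x ≤ 1 / (n + 1) := by
    intro n
    by_contra hcon
    push_neg at hcon
    obtain ⟨m, hm⟩ := exists_nat_gt ((∫ x, s x) * (n + 1))
    have h1 : ∀ x ∈ Ioc (n : ℝ) ((n : ℝ) + m), 1 / ((n : ℝ) + 1) ≤ s x :=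
      fun x hx => (hcon x hx.1.le).le
    have h2 : ∫ _x in Ioc (n : ℝ) ((n : ℝ) + m), (1 / ((n:ℝ) + 1)) ≤
        ∫ x in Ioc (n : ℝ) ((n : ℝ) + m), s x :=
      setIntegral_mono_on (integrableOn_const measure_Ioc_lt_top.ne) hs.integrableOn
        measurableSet_Ioc h1
    have h3 : ∫ x in Ioc (n:ℝ) ((n:ℝ)+m), s x ≤ ∫ x, s x :=
      setIntegral_le_integral hs (Filter.Eventually.of_forall h0)
    rw [setIntegral_const] at h2
    have hvol : (volume (Ioc (n:ℝ) ((n:ℝ)+m))).toReal = m := by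
      rw [Real.volume_Ioc]; simp
    rw [measureReal_def, hvol, smul_eq_mul] at h2
    have hn1 : (0:ℝ) < (n:ℝ) + 1 := by positivity
    have h4 : (m:ℝ) * (1 / ((n:ℝ)+1)) ≤ ∫ x, s x := h2.trans h3
    have : (m : ℝ) ≤ (∫ x, s x) * ((n:ℝ)+1) := by
      rw [mul_one_div, div_le_iff₀ hn1] at h4
      linarith
    linarith
  choose R hR1 hR2 using key
  refine ⟨R, tendsto_atTop_mono hR1 tendsto_natCast_atTop_atTop, ?_⟩
  refine squeeze_zero (fun n => h0 _) hR2 ?_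
  exact tendsto_one_div_add_atTop_nhds_zero_nat

lemma prodline {G : ℂ → ℂ} {a M : ℝ}
    (hGc : ∀ z : ℂ, |z.im| < a → ContinuousAt G z)
    (hline : ∀ y : ℝ, |y| < a → Integrable (fun x : ℝ => G ((x : ℂ) + (y : ℂ) * Complex.I)))
    (hbound : ∀ y : ℝ, |y| < a → (∫ x : ℝ, ‖G ((x : ℂ) + (y : ℂ) * Complex.I)‖) ≤ M)
    {T : Set ℝ} (hT : MeasurableSet T) (hTfin : volume T < ⊤)
    {φ : ℝ → ℂ} (hφ : Continuous φ) (him : ∀ t ∈ T, |(φ t).im| < a) :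
    Integrable (fun p : ℝ × ℝ => G ((p.2 : ℂ) + φ p.1)) ((volume.restrict T).prod volume) := by
  have hmeq : (volume.restrict T).prod (volume : Measure ℝ)
      = ((volume : Measure ℝ).prod volume).restrict (T ×ˢ univ) := by
    rw [← Measure.prod_restrict, Measure.restrict_univ]
  have hcontOn : ContinuousOn (fun p : ℝ × ℝ => G ((p.2 : ℂ) + φ p.1)) (T ×ˢ univ) := by
    intro p hp
    have h1 : ContinuousAt (fun p : ℝ × ℝ => (p.2 : ℂ) + φ p.1) p :=
      ((Complex.continuous_ofReal.comp continuous_snd).add (hφ.comp continuous_fst)).continuousAt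
    have h2 : ContinuousAt G ((p.2 : ℂ) + φ p.1) := by
      apply hGc
      simpa using him p.1 hp.1
    exact ContinuousAt.continuousWithinAt (h2.comp (x := p) h1)
  have hmeas : AEStronglyMeasurable (fun p : ℝ × ℝ => G ((p.2 : ℂ) + φ p.1))
      ((volume.restrict T).prod volume) := by
    rw [hmeq]
    exact hcontOn.aestronglyMeasurable (hT.prod MeasurableSet.univ)
  have keyEq : ∀ t : ℝ, (fun x : ℝ => G ((x:ℂ) + φ t))
      = fun x : ℝ => G ((↑(x + (φ t).re) : ℂ) + ((φ t).im : ℂ) * Complex.I) := by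
    intro t; funext x
    congr 1
    push_cast
    rw [add_assoc, Complex.re_add_im]
  refine (integrable_prod_iff hmeas).2 ⟨?_, ?_⟩
  · filter_upwards [ae_restrict_mem hT] with t ht
    have h1 := (hline (φ t).im (him t ht)).comp_add_right ((φ t).re)
    show Integrable fun x : ℝ => G ((x:ℂ) + φ t)
    rw [keyEq t]
    exact h1
  · have hAESM2 := hmeas.norm.integral_prod_right'
    refine Integrable.mono' (integrableOn_const (C := M) hTfin.ne) hAESM2 ?_
    filter_upwards [ae_restrict_mem hT] with t ht
    have hb : (∫ x : ℝ, ‖G ((x:ℂ) + φ t)‖) ≤ M := by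
      have h5 : (fun x : ℝ => ‖G ((x:ℂ) + φ t)‖)
          = fun x : ℝ => ‖G ((↑(x + (φ t).re):ℂ) + ((φ t).im:ℂ) * Complex.I)‖ := by
        funext x
        rw [congrFun (keyEq t) x]
      rw [h5,
        integral_add_right_eq_self (fun x : ℝ => ‖G ((x:ℂ) + ((φ t).im:ℂ)*Complex.I)‖) ((φ t).re)]
      exact hbound _ (him t ht)
    calc ‖∫ x : ℝ, ‖G ((x:ℂ) + φ t)‖‖ = ∫ x : ℝ, ‖G ((x:ℂ) + φ t)‖ := by
          rw [Real.norm_eq_abs, abs_of_nonneg (integral_nonneg fun _ => norm_nonneg _)]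
      _ ≤ M := hb


lemma horiz_integral_eq {g : ℂ → ℂ} {y₁ y₂ : ℝ} (hy : y₁ ≤ y₂)
    (hdiff : ∀ z : ℂ, z.im ∈ Icc y₁ y₂ → DifferentiableAt ℂ g z)
    (hint : ∀ y ∈ Icc y₁ y₂, Integrable (fun x : ℝ => g ((x:ℝ) + (y:ℝ) * Complex.I)))
    (hprod : Integrable (fun p : ℝ × ℝ => g ((p.2:ℝ) + (p.1:ℝ) * Complex.I))
      ((volume.restrict (Ioc y₁ y₂)).prod volume)) :
    (∫ x : ℝ, g ((x:ℝ) + (y₁:ℝ) * Complex.I)) = ∫ x : ℝ, g ((x:ℝ) + (y₂:ℝ) * Complex.I) := by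
  set sp : ℝ → ℝ := fun x => ∫ t in Ioc y₁ y₂, ‖g ((x:ℝ) + (t:ℝ)*Complex.I)‖ with hspdef
  have hspi : Integrable sp := hprod.swap.integral_norm_prod_left
  have hsnn : ∀ x, 0 ≤ sp x := fun x => integral_nonneg fun _ => norm_nonneg _
  set s : ℝ → ℝ := fun x => sp x + sp (-x) with hsdef
  have hsi : Integrable s := hspi.add hspi.comp_neg
  obtain ⟨R, hRtop, hRlim⟩ := exists_escape_seq hsi (fun x => add_nonneg (hsnn _) (hsnn _))
  have rect : ∀ r : ℝ,
      ((∫ x in (-r)..r, g ((x:ℝ) + (y₁:ℝ)*Complex.I)) - ∫ x in (-r)..r, g ((x:ℝ) + (y₂:ℝ)*Complex.I))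
      = Complex.I • (∫ t in y₁..y₂, g ((((-r):ℝ):ℂ) + (t:ℝ)*Complex.I))
        - Complex.I • (∫ t in y₁..y₂, g (((r:ℝ):ℂ) + (t:ℝ)*Complex.I)) := by
    intro r
    have H := Complex.integral_boundary_rect_eq_zero_of_differentiableOn g
      (((-r : ℝ) : ℂ) + (y₁:ℝ) * Complex.I) (((r : ℝ):ℂ) + (y₂:ℝ) * Complex.I) ?_
    · simp only [Complex.add_re, Complex.ofReal_re, Complex.mul_re, Complex.I_re, Complex.I_im,
        Complex.ofReal_im, Complex.add_im, Complex.mul_im, mul_zero, mul_one, zero_mul, sub_zero,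
        zero_add, add_zero, zero_sub, neg_neg, one_mul] at H
      simp only [smul_eq_mul] at H ⊢
      linear_combination H
    · intro z hz
      refine (hdiff z ?_).differentiableWithinAt
      rw [Complex.mem_reProdIm] at hz
      have h2 := hz.2
      simp only [Complex.add_im, Complex.ofReal_im, Complex.mul_im, Complex.I_im, Complex.I_re,
        Complex.ofReal_re, mul_zero, mul_one, zero_add, zero_mul, add_zero] at h2
      rwa [Set.uIcc_of_le hy] at h2
  have hI1 : Tendsto (fun j => ∫ x in (-(R j))..(R j), g ((x:ℝ) + (y₁:ℝ)*Complex.I)) atTop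
      (nhds (∫ x : ℝ, g ((x:ℝ) + (y₁:ℝ)*Complex.I))) :=
    intervalIntegral_tendsto_integral (hint y₁ ⟨le_refl _, hy⟩)
      (tendsto_neg_atTop_atBot.comp hRtop) hRtop
  have hI2 : Tendsto (fun j => ∫ x in (-(R j))..(R j), g ((x:ℝ) + (y₂:ℝ)*Complex.I)) atTop
      (nhds (∫ x : ℝ, g ((x:ℝ) + (y₂:ℝ)*Complex.I))) :=
    intervalIntegral_tendsto_integral (hint y₂ ⟨hy, le_refl _⟩)
      (tendsto_neg_atTop_atBot.comp hRtop) hRtop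
  have h1 : ∀ c : ℝ, ‖∫ t in y₁..y₂, g ((c:ℝ) + (t:ℝ)*Complex.I)‖ ≤ sp c := by
    intro c
    refine (intervalIntegral.norm_integral_le_integral_norm hy).trans_eq ?_
    rw [intervalIntegral.integral_of_le hy]
  have hside : ∀ j, ‖(Complex.I • (∫ t in y₁..y₂, g ((((-(R j)):ℝ):ℂ) + (t:ℝ)*Complex.I))
      - Complex.I • (∫ t in y₁..y₂, g ((((R j):ℝ):ℂ) + (t:ℝ)*Complex.I)))‖ ≤ s (R j) := by
    intro j
    calc ‖_ - _‖ ≤ ‖Complex.I • (∫ t in y₁..y₂, g ((((-(R j)):ℝ):ℂ) + (t:ℝ)*Complex.I))‖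
        + ‖Complex.I • (∫ t in y₁..y₂, g ((((R j):ℝ):ℂ) + (t:ℝ)*Complex.I))‖ := norm_sub_le _ _
      _ ≤ sp (-(R j)) + sp (R j) := by
          rw [norm_smul, norm_smul, Complex.norm_I, one_mul, one_mul]
          exact add_le_add (h1 _) (h1 _)
      _ = s (R j) := by simp only [hsdef]; ring
  have hzero : Tendsto (fun j => (∫ x in (-(R j))..(R j), g ((x:ℝ) + (y₁:ℝ)*Complex.I))
      - ∫ x in (-(R j))..(R j), g ((x:ℝ) + (y₂:ℝ)*Complex.I)) atTop (nhds 0) := by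
    refine squeeze_zero_norm (fun j => ?_) hRlim
    rw [rect (R j)]
    exact hside j
  have h0 := tendsto_nhds_unique (hI1.sub hI2) hzero
  exact sub_eq_zero.mp h0

lemma sup_bound {F F' : ℝ → ℂ} (hder : ∀ t : ℝ, HasDerivAt F (F' t) t)
    (hFc : Continuous F) (hF'c : Continuous F') {u v : ℝ} (huv : u < v)
    {x : ℝ} (hx : x ∈ Icc u v) :
    ‖F x‖ ≤ (v - u)⁻¹ * (∫ t in Icc u v, ‖F t‖) + ∫ t in Icc u v, ‖F' t‖ := by
  set A := ∫ t in Icc u v, ‖F t‖ with hA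
  set B := ∫ t in Icc u v, ‖F' t‖ with hB
  have key : ∀ y ∈ Icc u v, ‖F x‖ ≤ ‖F y‖ + B := by
    intro y hy
    have ftc : ∫ t in y..x, F' t = F x - F y :=
      intervalIntegral.integral_eq_sub_of_hasDerivAt (fun t _ => hder t)
        (hF'c.intervalIntegrable y x)
    have hsub : Set.uIoc y x ⊆ Icc u v :=
      Set.Ioc_subset_Icc_self.trans (Set.Icc_subset_Icc (le_min hy.1 hx.1) (max_le hy.2 hx.2))
    have h1 : ‖F x - F y‖ ≤ B := by
      rw [← ftc]
      refine (intervalIntegral.norm_integral_le_integral_norm_uIoc).trans ?_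
      exact setIntegral_mono_set (hF'c.norm.integrableOn_Icc)
        (Filter.Eventually.of_forall fun t => norm_nonneg _)
        (HasSubset.Subset.eventuallyLE hsub)
    have h2 : F x = F y + (F x - F y) := by ring
    calc ‖F x‖ = ‖F y + (F x - F y)‖ := by rw [← h2]
      _ ≤ ‖F y‖ + ‖F x - F y‖ := norm_add_le _ _
      _ ≤ ‖F y‖ + B := by linarith
  have hFin : IntegrableOn (fun y => ‖F y‖) (Icc u v) volume := hFc.norm.integrableOn_Icc
  have hBin : IntegrableOn (fun _ : ℝ => B) (Icc u v) volume :=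
    integrableOn_const measure_Icc_lt_top.ne
  have hint : ∫ _y in Icc u v, ‖F x‖ ≤ ∫ y in Icc u v, (‖F y‖ + B) :=
    setIntegral_mono_on (integrableOn_const measure_Icc_lt_top.ne)
      (hFin.add hBin) measurableSet_Icc key
  rw [setIntegral_const, integral_add hFin hBin, setIntegral_const] at hint
  rw [Real.volume_real_Icc_of_le huv.le] at hint
  rw [smul_eq_mul, smul_eq_mul] at hint
  have hvu : 0 < v - u := by linarith
  calc ‖F x‖ = (v-u)⁻¹ * ((v-u) * ‖F x‖) := by field_simp
    _ ≤ (v-u)⁻¹ * (A + (v-u)*B) := by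
        apply mul_le_mul_of_nonneg_left _ (inv_nonneg.2 hvu.le)
        linarith
    _ = (v-u)⁻¹ * A + B := by field_simp

lemma summable_setIntegral {h : ℝ → ℝ} (hi : Integrable h) (h0 : ∀ t, 0 ≤ h t)
    {c : ℝ} (hc : 0 < c) (N : ℕ) :
    Summable (fun n : ℤ => ∫ t in Icc (c*((n:ℝ) - N)) (c*((n:ℝ) + N)), h t) := by
  set A : ℤ → ℝ := fun j => ∫ t in (c*(j:ℝ))..(c*((j:ℝ)+1)), h t with hAdef
  have hmono : ∀ j : ℤ, c*(j:ℝ) ≤ c*((j:ℝ)+1) := fun j => by nlinarith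
  have hA0 : ∀ j, 0 ≤ A j := fun j =>
    intervalIntegral.integral_nonneg (hmono j) (fun t _ => h0 t)
  have hre : ∀ j : ℤ, A j = ∫ t in Ioc (c*(j:ℝ)) (c*((j:ℝ)+1)), h t := fun j =>
    intervalIntegral.integral_of_le (hmono j)
  have hAineq : ∀ sfin : Finset ℤ, (∑ j ∈ sfin, A j) ≤ ∫ t, h t := by
    intro sfin
    have hdisj : (↑sfin : Set ℤ).Pairwise
        (Function.onFun Disjoint fun j : ℤ => Ioc (c*(j:ℝ)) (c*((j:ℝ)+1))) := by
      intro i _ j _ hij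
      have key : ∀ i j : ℤ, i < j →
          Disjoint (Ioc (c*(i:ℝ)) (c*((i:ℝ)+1))) (Ioc (c*(j:ℝ)) (c*((j:ℝ)+1))) := by
        intro i j hij
        apply Set.Ioc_disjoint_Ioc.mpr
        have : c*((i:ℝ)+1) ≤ c*(j:ℝ) := by
          have : (i:ℝ) + 1 ≤ (j:ℝ) := by exact_mod_cast hij
          nlinarith
        exact (min_le_left _ _).trans (this.trans (le_max_right _ _))
      rcases lt_or_gt_of_ne hij with hlt | hgt
      · exact key i j hlt
      · exact (key j i hgt).symm
    calc (∑ j ∈ sfin, A j) = ∑ j ∈ sfin, ∫ t in Ioc (c*(j:ℝ)) (c*((j:ℝ)+1)), h t :=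
          Finset.sum_congr rfl fun j _ => hre j
      _ = ∫ t in ⋃ j ∈ sfin, Ioc (c*(j:ℝ)) (c*((j:ℝ)+1)), h t :=
          (integral_biUnion_finset sfin (fun j _ => measurableSet_Ioc) hdisj
            (fun j _ => hi.integrableOn)).symm
      _ ≤ ∫ t, h t := setIntegral_le_integral hi (Filter.Eventually.of_forall h0)
  have hAsum : Summable A := summable_of_sum_le (fun j => hA0 j) hAineq
  have htrans : ∀ k : ℤ, Summable fun n : ℤ => A (n + k) := fun k =>
    hAsum.comp_injective (add_left_injective k)
  have hsum2 : Summable fun n : ℤ => ∑ i ∈ Finset.range (2*N), A (n + ((i : ℤ) - (N:ℤ))) :=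
    summable_sum (fun i _ => htrans _)
  apply hsum2.congr
  intro n
  have hle : c*((n:ℝ) - N) ≤ c*((n:ℝ) + N) := by nlinarith [Nat.cast_nonneg (α := ℝ) N]
  rw [integral_Icc_eq_integral_Ioc, ← intervalIntegral.integral_of_le hle]
  have hadj := intervalIntegral.sum_integral_adjacent_intervals
    (f := h) (μ := volume) (a := fun k : ℕ => c*((n:ℝ) - N + k)) (n := 2*N)
    (fun k _ => hi.intervalIntegrable)
  have e0 : c*((n:ℝ) - N + ((0:ℕ):ℝ)) = c*((n:ℝ) - N) := by norm_num
  have e1 : c*((n:ℝ) - N + ((2*N:ℕ):ℝ)) = c*((n:ℝ) + N) := by push_cast; ring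
  beta_reduce at hadj
  rw [e0, e1] at hadj
  rw [← hadj]
  refine Finset.sum_congr rfl fun i _ => ?_
  have e2 : ((n + ((i:ℤ) - (N:ℤ)) : ℤ) : ℝ) = (n:ℝ) - N + i := by push_cast; ring
  simp only [hAdef]
  rw [e2]
  congr 1
  push_cast
  ring

end PSEaux

open scoped FourierTransform Topology

set_option maxHeartbeats 1000000

theorem poisson_summation_exponential (a : ℝ) (ha : 0 < a) (F : ℝ → ℂ) (G : ℂ → ℂ)
    (hG_an : AnalyticOnNhd ℂ G {ζ : ℂ | |ζ.im| < a})
    (hGF : ∀ x : ℝ, G (x : ℂ) = F x)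
    (hline : ∀ b : ℝ, |b| < a → Integrable (fun k : ℝ => G ((k : ℂ) + (b : ℂ) * Complex.I)))
    (hbound : ∃ M : ℝ, ∀ b : ℝ, |b| < a →
      (∫ k : ℝ, ‖G ((k : ℂ) + (b : ℂ) * Complex.I)‖) ≤ M) :
    ∀ b : ℝ, 0 < b → b < a → ∃ C : ℝ, ∀ L : ℝ, 1 ≤ L →
      ‖(1 / (L : ℂ)) * ∑' n : ℤ, F (2 * Real.pi * n / L) -
          (1 / (2 * Real.pi) : ℂ) * ∫ k, F k‖ ≤ C * Real.exp (-b * L) := by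
  obtain ⟨M, hM⟩ := hbound
  intro b hb hba
  set β : ℝ := (a + b) / 2 with hβdef
  have hβpos : 0 < β := by rw [hβdef]; linarith
  have hβa : β < a := by rw [hβdef]; linarith
  have hbβ : b ≤ β := by rw [hβdef]; linarith
  have hGc : ∀ z : ℂ, |z.im| < a → ContinuousAt G z := fun z hz => (hG_an z hz).continuousAt
  have hGd : ∀ z : ℂ, |z.im| < a → DifferentiableAt ℂ G z := fun z hz =>
    (hG_an z hz).differentiableAt
  have hreal : ∀ x : ℝ, |((x : ℂ)).im| < a := fun x => by simpa using ha
  have hFc : Continuous F := by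
    have h1 : Continuous fun x : ℝ => G (x : ℂ) :=
      continuous_iff_continuousAt.2 fun x =>
        (hGc _ (hreal x)).comp Complex.continuous_ofReal.continuousAt
    exact h1.congr hGF
  set F' : ℝ → ℂ := fun t => deriv G (t : ℂ) with hF'def
  have hG'an : AnalyticOnNhd ℂ (deriv G) {ζ : ℂ | |ζ.im| < a} := hG_an.deriv
  have hF'c : Continuous F' := continuous_iff_continuousAt.2 fun x =>
    ((hG'an _ (hreal x)).continuousAt).comp Complex.continuous_ofReal.continuousAt
  have hder : ∀ t : ℝ, HasDerivAt F (F' t) t := by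
    intro t
    have h1 : HasDerivAt G (deriv G (t : ℂ)) (t : ℂ) := (hGd _ (hreal t)).hasDerivAt
    have h2 : HasDerivAt (fun y : ℝ => G (y : ℂ)) (deriv G (t : ℂ)) t := h1.comp_ofReal
    exact h2.congr_of_eventuallyEq (Filter.Eventually.of_forall fun y => (hGF y).symm)
  have hzero_lt : |(0:ℝ)| < a := by simpa using ha
  have hFint : Integrable F :=
    (hline 0 hzero_lt).congr (Filter.Eventually.of_forall fun x => by simpa using hGF x)
  have hM0 : 0 ≤ M := le_trans (integral_nonneg fun _ => norm_nonneg _) (hM 0 hzero_lt)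
  -- integrability of the derivative on the real line
  set r : ℝ := a / 2 with hrdef
  have hr : 0 < r := by rw [hrdef]; linarith
  have hra : r < a := by rw [hrdef]; linarith
  set φc : ℝ → ℂ := fun θ => (r : ℂ) * Complex.exp ((θ : ℂ) * Complex.I) with hφcdef
  have hφc_cont : Continuous φc :=
    continuous_const.mul (Complex.continuous_exp.comp (Complex.continuous_ofReal.mul
      continuous_const))
  have hφc_im : ∀ θ : ℝ, |(φc θ).im| < a := by
    intro θ
    have h1 : (φc θ).im = r * Real.sin θ := by
      rw [hφcdef]
      simp [Complex.mul_im, Complex.exp_ofReal_mul_I_im, Complex.exp_ofReal_mul_I_re]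
    rw [h1, abs_mul, abs_of_pos hr]
    nlinarith [Real.abs_sin_le_one θ, abs_nonneg (Real.sin θ)]
  have hPcirc := PSEaux.prodline hGc hline hM (measurableSet_Ioc (a := (0:ℝ)) (b := 2*Real.pi))
    measure_Ioc_lt_top hφc_cont (fun t _ => hφc_im t)
  set D : ℝ → ℝ :=
    fun x => (2*Real.pi)⁻¹ * (r⁻¹ * ∫ θ in Set.Ioc 0 (2*Real.pi), ‖G ((x:ℂ) + φc θ)‖) with hDdef
  have hDint : Integrable D := by
    rw [hDdef]
    exact ((hPcirc.swap.integral_norm_prod_left).const_mul r⁻¹).const_mul (2*Real.pi)⁻¹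
  have hptw : ∀ x : ℝ, ‖F' x‖ ≤ D x := by
    intro x
    have hsub : Metric.closedBall ((x : ℂ)) r ⊆ {z : ℂ | |z.im| < a} := by
      intro z hz
      have h1 : |z.im| ≤ dist z (x : ℂ) := by
        rw [Complex.dist_eq]
        have h2 := Complex.abs_im_le_norm (z - (x : ℂ))
        simpa using h2
      exact lt_of_le_of_lt (h1.trans (Metric.mem_closedBall.1 hz)) hra
    have hdc : DiffContOnCl ℂ G (Metric.ball (x : ℂ) r) :=
      ⟨fun z hz => (hGd z (hsub (Metric.ball_subset_closedBall hz))).differentiableWithinAt,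
       fun z hz => (hGc z (hsub (by rwa [closure_ball _ hr.ne'] at hz))).continuousWithinAt⟩
    have hdrv : deriv G (x:ℂ) = ((2 * (Real.pi:ℝ) * Complex.I : ℂ))⁻¹ •
        ∮ z in C((x:ℂ), r), (z - (x:ℂ)) ^ (-2 : ℤ) • G z := by
      have h := hdc.deriv_eq_smul_circleIntegral hr
      have e : ∀ z : ℂ, (z - (x:ℂ)) ^ (-2 : ℤ) = 1 / (z - (x:ℂ)) ^ 2 := fun z => by
        rw [zpow_neg, zpow_two, sq, one_div]
      simp_rw [e, h]
      rw [smul_smul, inv_mul_cancel₀ Complex.two_pi_I_ne_zero, one_smul]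
    calc ‖F' x‖ = ‖((2 * (Real.pi:ℝ) * Complex.I : ℂ))⁻¹‖ *
          ‖∮ z in C((x:ℂ), r), (z - (x:ℂ)) ^ (-2 : ℤ) • G z‖ := by
          simp only [hF'def]
          rw [hdrv, norm_smul]
      _ = (2*Real.pi)⁻¹ * ‖∮ z in C((x:ℂ), r), (z - (x:ℂ)) ^ (-2 : ℤ) • G z‖ := by
          congr 1
          rw [norm_inv]
          congr 1
          simp only [norm_mul, Complex.norm_I, Complex.norm_real, Complex.norm_ofNat,
            mul_one, Real.norm_eq_abs]
          rw [abs_of_pos Real.pi_pos]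
      _ ≤ (2*Real.pi)⁻¹ * ∫ θ in (0:ℝ)..(2*Real.pi),
            ‖deriv (circleMap (x:ℂ) r) θ •
              (((circleMap (x:ℂ) r θ) - (x:ℂ)) ^ (-2:ℤ) • G (circleMap (x:ℂ) r θ))‖ := by
          apply mul_le_mul_of_nonneg_left _ (by positivity)
          exact intervalIntegral.norm_integral_le_integral_norm Real.two_pi_pos.le
      _ = (2*Real.pi)⁻¹ * ∫ θ in (0:ℝ)..(2*Real.pi), r⁻¹ * ‖G ((x:ℂ) + φc θ)‖ := by
          congr 1
          apply intervalIntegral.integral_congr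
          intro θ _
          beta_reduce
          have h1 : ‖deriv (circleMap (x:ℂ) r) θ‖ = r := by
            rw [deriv_circleMap]
            rw [norm_mul]
            simp only [norm_circleMap_zero, Complex.norm_I, mul_one]
            exact abs_of_pos hr
          have h2 : ‖(circleMap (x:ℂ) r θ - (x:ℂ)) ^ (-2:ℤ)‖ = r ^ (-2:ℤ) := by
            rw [circleMap_sub_center, norm_zpow]
            congr 1
            simp only [norm_circleMap_zero]
            exact abs_of_pos hr
          have h3 : circleMap (x:ℂ) r θ = (x:ℂ) + φc θ := rfl
          rw [norm_smul, norm_smul, h1, h2, h3,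
            zpow_neg, show ((2:ℤ)) = ((2:ℕ):ℤ) from rfl, zpow_natCast]
          field_simp
      _ = D x := by
          rw [intervalIntegral.integral_const_mul,
            intervalIntegral.integral_of_le Real.two_pi_pos.le]
  have hF'int : Integrable F' :=
    hDint.mono' hF'c.aestronglyMeasurable (Filter.Eventually.of_forall hptw)
  -- decay of the Fourier transform
  have habsβ : |β| < a := by rw [abs_of_pos hβpos]; exact hβa
  have hprodG : ∀ y₁ y₂ : ℝ, -a < y₁ → y₂ < a → y₁ ≤ y₂ →
      Integrable (fun p : ℝ × ℝ => G ((p.2:ℝ) + (p.1:ℝ)*Complex.I))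
        ((volume.restrict (Set.Ioc y₁ y₂)).prod volume) := by
    intro y₁ y₂ h1 h2 _h12
    refine PSEaux.prodline hGc hline hM measurableSet_Ioc measure_Ioc_lt_top
      (Complex.continuous_ofReal.mul continuous_const) (fun t ht => ?_)
    show |((t:ℂ) * Complex.I).im| < a
    simp only [Complex.mul_im, Complex.ofReal_re, Complex.I_im, Complex.ofReal_im,
      Complex.I_re, mul_one, mul_zero, add_zero]
    exact abs_lt.2 ⟨lt_of_lt_of_le h1 ht.1.le, lt_of_le_of_lt ht.2 h2⟩
  have hdecay : ∀ ξ : ℝ, ‖𝓕 F ξ‖ ≤ M * Real.exp (-(2*Real.pi*β)*|ξ|) := by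
    intro ξ
    set g : ℂ → ℂ := fun z =>
      Complex.exp ((-2*(Real.pi:ℂ)*(ξ:ℂ)) * z * Complex.I) * G z with hgdef
    have hgnorm : ∀ (x t : ℝ), ‖g ((x:ℝ) + (t:ℝ)*Complex.I)‖
        = Real.exp (2*Real.pi*ξ*t) * ‖G ((x:ℝ) + (t:ℝ)*Complex.I)‖ := by
      intro x t
      rw [hgdef]
      simp only [norm_mul]
      congr 1
      rw [Complex.norm_exp]
      congr 1
      simp only [Complex.mul_re, Complex.mul_im, Complex.add_re, Complex.add_im, Complex.I_re,
        Complex.I_im, Complex.ofReal_re, Complex.ofReal_im, Complex.neg_re, Complex.neg_im,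
        Complex.re_ofNat, Complex.im_ofNat, mul_zero, mul_one, zero_mul, sub_zero, zero_sub,
        add_zero, zero_add, neg_zero, neg_neg]
      ring
    have hgdiff : ∀ z : ℂ, |z.im| < a → DifferentiableAt ℂ g z := by
      intro z hz
      exact (((differentiableAt_id.const_mul _).mul_const Complex.I).cexp).mul (hGd z hz)
    have hgint : ∀ y : ℝ, |y| < a → Integrable fun x : ℝ => g ((x:ℝ) + (y:ℝ)*Complex.I) := by
      intro y hy
      refine ((hline y hy).norm.const_mul (Real.exp (2*Real.pi*ξ*y))).mono' ?_ ?_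
      · have hc1 : Continuous fun x : ℝ => (x:ℂ) + (y:ℂ)*Complex.I :=
          Complex.continuous_ofReal.add continuous_const
        have hc2 : Continuous fun x : ℝ => G ((x:ℝ) + (y:ℝ)*Complex.I) :=
          continuous_iff_continuousAt.2 fun x =>
            (hGc _ (by simpa using hy)).comp hc1.continuousAt
        have hc3 : Continuous fun x : ℝ =>
            Complex.exp ((-2*(Real.pi:ℂ)*(ξ:ℂ)) * ((x:ℝ) + (y:ℝ)*Complex.I) * Complex.I) :=
          Complex.continuous_exp.comp ((continuous_const.mul hc1).mul continuous_const)
        exact (hc3.mul hc2).aestronglyMeasurable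
      · refine Filter.Eventually.of_forall fun x => ?_
        rw [hgnorm x y]
    have hgprod : ∀ y₁ y₂ : ℝ, -a < y₁ → y₂ < a → y₁ ≤ y₂ → (∀ t ∈ Set.Ioc y₁ y₂, |t| ≤ β) →
        Integrable (fun p : ℝ × ℝ => g ((p.2:ℝ) + (p.1:ℝ)*Complex.I))
          ((volume.restrict (Set.Ioc y₁ y₂)).prod volume) := by
      intro y₁ y₂ h1 h2 h12 hβb'
      have hPG := hprodG y₁ y₂ h1 h2 h12
      refine (hPG.norm.const_mul (Real.exp (2 * Real.pi * |ξ| * β))).mono' ?_ ?_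
      · have hc1 : Continuous fun p : ℝ × ℝ =>
            Complex.exp ((-2*(Real.pi:ℂ)*(ξ:ℂ)) * ((p.2:ℝ) + (p.1:ℝ)*Complex.I) * Complex.I) := by
          apply Complex.continuous_exp.comp
          fun_prop
        exact hc1.aestronglyMeasurable.mul hPG.aestronglyMeasurable
      · have hmeq : (volume.restrict (Set.Ioc y₁ y₂)).prod (volume : Measure ℝ)
            = ((volume : Measure ℝ).prod volume).restrict (Set.Ioc y₁ y₂ ×ˢ Set.univ) := by
          rw [← Measure.prod_restrict, Measure.restrict_univ]
        rw [hmeq]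
        filter_upwards [ae_restrict_mem (measurableSet_Ioc.prod MeasurableSet.univ)] with p hp
        rw [hgnorm p.2 p.1]
        have h4 : |p.1| ≤ β := hβb' p.1 hp.1
        have h3 : 2 * Real.pi * ξ * p.1 ≤ 2 * Real.pi * |ξ| * β := by
          calc 2 * Real.pi * ξ * p.1 ≤ |2 * Real.pi * ξ * p.1| := le_abs_self _
            _ = 2 * Real.pi * |ξ| * |p.1| := by
                rw [abs_mul, abs_mul, abs_of_pos Real.two_pi_pos]
            _ ≤ 2 * Real.pi * |ξ| * β :=
                mul_le_mul_of_nonneg_left h4 (by positivity)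
        exact mul_le_mul_of_nonneg_right (Real.exp_le_exp.2 h3) (norm_nonneg _)
    rcases le_or_gt 0 ξ with hξ | hξ
    · have key := PSEaux.horiz_integral_eq (g := g) (y₁ := -β) (y₂ := 0) (by linarith)
        (fun z hz => hgdiff z (by
          rcases hz with ⟨hz1, hz2⟩
          rw [abs_lt]; constructor <;> linarith))
        (fun y hy => hgint y (by
          rw [abs_lt]; rcases hy with ⟨hy1, hy2⟩; constructor <;> linarith))
        (hgprod _ _ (by linarith) (by linarith) (by linarith)
          (fun t ht => by
            rw [abs_le]; rcases ht with ⟨ht1, ht2⟩; constructor <;> linarith))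
      have hFT : 𝓕 F ξ = ∫ x : ℝ, g ((x:ℝ) + ((0:ℝ):ℝ)*Complex.I) := by
        rw [Real.fourier_real_eq_integral_exp_smul]
        refine integral_congr_ae (Filter.Eventually.of_forall fun x => ?_)
        rw [hgdef]
        simp only [Complex.ofReal_zero, zero_mul, add_zero, hGF x, smul_eq_mul]
        congr 2
        push_cast
        ring
      rw [hFT, ← key]
      calc ‖∫ x:ℝ, g ((x:ℝ) + ((-β:ℝ):ℝ)*Complex.I)‖
          ≤ ∫ x:ℝ, ‖g ((x:ℝ) + ((-β:ℝ):ℝ)*Complex.I)‖ := norm_integral_le_integral_norm _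
        _ = Real.exp (2*Real.pi*ξ*(-β)) * ∫ x:ℝ, ‖G ((x:ℝ) + ((-β:ℝ):ℝ)*Complex.I)‖ := by
            rw [← integral_const_mul]
            exact integral_congr_ae (Filter.Eventually.of_forall fun x => hgnorm x (-β))
        _ ≤ Real.exp (2*Real.pi*ξ*(-β)) * M := by
            apply mul_le_mul_of_nonneg_left (hM (-β) (by rwa [abs_neg])) (Real.exp_pos _).le
        _ = M * Real.exp (-(2*Real.pi*β)*|ξ|) := by
            rw [abs_of_nonneg hξ, show 2*Real.pi*ξ*(-β) = -(2*Real.pi*β)*ξ by ring]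
            ring
    · have key := PSEaux.horiz_integral_eq (g := g) (y₁ := 0) (y₂ := β) hβpos.le
        (fun z hz => hgdiff z (by
          rcases hz with ⟨hz1, hz2⟩
          rw [abs_lt]; constructor <;> linarith))
        (fun y hy => hgint y (by
          rw [abs_lt]; rcases hy with ⟨hy1, hy2⟩; constructor <;> linarith))
        (hgprod _ _ (by linarith) (by linarith) hβpos.le
          (fun t ht => by
            rw [abs_le]; rcases ht with ⟨ht1, ht2⟩; constructor <;> linarith))
      have hFT : 𝓕 F ξ = ∫ x : ℝ, g ((x:ℝ) + ((0:ℝ):ℝ)*Complex.I) := by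
        rw [Real.fourier_real_eq_integral_exp_smul]
        refine integral_congr_ae (Filter.Eventually.of_forall fun x => ?_)
        rw [hgdef]
        simp only [Complex.ofReal_zero, zero_mul, add_zero, hGF x, smul_eq_mul]
        congr 2
        push_cast
        ring
      rw [hFT, key]
      calc ‖∫ x:ℝ, g ((x:ℝ) + ((β:ℝ):ℝ)*Complex.I)‖
          ≤ ∫ x:ℝ, ‖g ((x:ℝ) + ((β:ℝ):ℝ)*Complex.I)‖ := norm_integral_le_integral_norm _
        _ = Real.exp (2*Real.pi*ξ*β) * ∫ x:ℝ, ‖G ((x:ℝ) + ((β:ℝ):ℝ)*Complex.I)‖ := by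
            rw [← integral_const_mul]
            exact integral_congr_ae (Filter.Eventually.of_forall fun x => hgnorm x β)
        _ ≤ Real.exp (2*Real.pi*ξ*β) * M := by
            apply mul_le_mul_of_nonneg_left (hM β habsβ) (Real.exp_pos _).le
        _ = M * Real.exp (-(2*Real.pi*β)*|ξ|) := by
            rw [abs_of_neg hξ, show 2*Real.pi*ξ*β = -(2*Real.pi*β)*(-ξ) by ring]
            ring
  -- now fix L and apply Poisson summation
  refine ⟨M * (Real.pi * (1 - Real.exp (-β)))⁻¹, ?_⟩
  intro L hL
  have hL0 : (0:ℝ) < L := by linarith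
  set cc : ℝ := 2*Real.pi/L with hccdef
  have hcc : 0 < cc := by rw [hccdef]; positivity
  set q : ℝ := Real.exp (-(β*L)) with hqdef
  have hq0 : 0 < q := Real.exp_pos _
  have hq1 : q < 1 := by
    rw [hqdef]
    calc Real.exp (-(β*L)) < Real.exp 0 := Real.exp_lt_exp.2 (by nlinarith)
      _ = 1 := Real.exp_zero
  set v : ℤ → ℝ := fun m => q ^ m.natAbs with hvdef
  have hvnn : ∀ m, 0 ≤ v m := fun m => pow_nonneg hq0.le _
  have hgeo : Summable (fun n : ℕ => q ^ n) := summable_geometric_of_lt_one hq0.le hq1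
  have hnat : (fun n : ℕ => v ((n:ℤ))) = fun n : ℕ => q ^ n := by
    funext n; rw [hvdef]; simp
  have hneg : (fun n : ℕ => v (-((n:ℤ)+1))) = fun n : ℕ => q * q ^ n := by
    funext n; rw [hvdef]
    have h1 : (-((n:ℤ)+1)).natAbs = n+1 := by omega
    simp only [h1, pow_succ]
    ring
  have hv : Summable v :=
    Summable.of_nat_of_neg_add_one (by rw [hnat]; exact hgeo) (by rw [hneg]; exact hgeo.mul_left q)
  have hvsum : ∑' m : ℤ, v m = (1-q)⁻¹ + q * (1-q)⁻¹ := by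
    rw [tsum_of_nat_of_neg_add_one (by rw [hnat]; exact hgeo) (by rw [hneg]; exact hgeo.mul_left q)]
    rw [hnat, hneg, tsum_mul_left, tsum_geometric_of_lt_one hq0.le hq1]
  set u : ℤ → ℂ := fun m => 𝓕 F ((m:ℝ)/cc) with hudef
  have hu_le : ∀ m : ℤ, ‖u m‖ ≤ M * v m := by
    intro m
    rw [hudef]
    refine (hdecay _).trans ?_
    apply mul_le_mul_of_nonneg_left _ hM0
    have h1 : |(m:ℝ)/cc| = (m.natAbs : ℝ) * L / (2*Real.pi) := by
      rw [abs_div, abs_of_pos hcc, hccdef, Nat.cast_natAbs, Int.cast_abs, div_div_eq_mul_div]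
    have h2 : -(2*Real.pi*β) * |(m:ℝ)/cc| = (m.natAbs : ℝ) * (-(β*L)) := by
      rw [h1]
      field_simp
    refine le_of_eq ?_
    rw [h2, Real.exp_nat_mul, ← hqdef, hvdef]
  have hSu : Summable u := Summable.of_norm_bounded (hv.mul_left M) hu_le
  set fL : C(ℝ, ℂ) := ⟨fun x => F (cc*x), hFc.comp (continuous_const.mul continuous_id)⟩
    with hfLdef
  have hscale : ∀ w : ℝ,
      𝓕 (⇑fL) w = (cc⁻¹ : ℝ) • 𝓕 F (w/cc) := by
    intro w
    rw [Real.fourier_real_eq_integral_exp_smul,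
      Real.fourier_real_eq_integral_exp_smul]
    have hfun : (fun x : ℝ => Complex.exp (((-2*Real.pi*x*w : ℝ):ℂ) * Complex.I) • fL x)
        = fun x : ℝ =>
          (fun u' : ℝ => Complex.exp (((-2*Real.pi*u'*(w/cc) : ℝ):ℂ) * Complex.I) • F u')
            (cc * x) := by
      funext x
      have harg : -2*Real.pi*x*w = -2*Real.pi*(cc*x)*(w/cc) := by
        field_simp
      simp only [hfLdef, ContinuousMap.coe_mk, harg]
    rw [hfun, MeasureTheory.Measure.integral_comp_mul_left
      (fun u' : ℝ => Complex.exp (((-2*Real.pi*u'*(w/cc) : ℝ):ℂ) * Complex.I) • F u') cc]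
    rw [abs_of_pos (inv_pos.2 hcc)]
  have h_sum : Summable fun m : ℤ => 𝓕 (⇑fL) (m:ℝ) := by
    apply Summable.of_norm_bounded ((hv.mul_left M).mul_left cc⁻¹)
    intro m
    rw [hscale]
    rw [norm_smul, Real.norm_eq_abs, abs_of_pos (inv_pos.2 hcc)]
    exact mul_le_mul_of_nonneg_left (hu_le m) (inv_pos.2 hcc).le
  have h_norm : ∀ K : TopologicalSpace.Compacts ℝ,
      Summable fun n : ℤ => ‖(fL.comp (ContinuousMap.addRight (n:ℝ))).restrict K‖ := by
    intro K
    obtain ⟨ρ, hρ⟩ := K.isCompact.isBounded.subset_closedBall 0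
    set N : ℕ := ⌈ρ⌉₊ + 1 with hNdef
    have hN1 : (1:ℝ) ≤ (N:ℝ) := by
      rw [hNdef]
      exact_mod_cast Nat.one_le_iff_ne_zero.2 (by omega)
    have hρN : ρ ≤ (N:ℝ) := by
      calc ρ ≤ (⌈ρ⌉₊ : ℝ) := Nat.le_ceil ρ
        _ ≤ (N:ℝ) := by rw [hNdef]; exact_mod_cast Nat.le_succ _
    have hKsub : (K : Set ℝ) ⊆ Set.Icc (-(N:ℝ)) N := by
      intro x hx
      have h1 := hρ hx
      rw [Real.closedBall_eq_Icc] at h1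
      constructor
      · linarith [h1.1]
      · linarith [h1.2]
    set sfn : ℤ → ℝ := fun n =>
      (2*cc*N)⁻¹ * (∫ t in Set.Icc (cc*((n:ℝ)-N)) (cc*((n:ℝ)+N)), ‖F t‖)
        + ∫ t in Set.Icc (cc*((n:ℝ)-N)) (cc*((n:ℝ)+N)), ‖F' t‖ with hsfndef
    have hssum : Summable sfn :=
      ((PSEaux.summable_setIntegral hFint.norm (fun t => norm_nonneg _) hcc N).mul_left _).add
        (PSEaux.summable_setIntegral hF'int.norm (fun t => norm_nonneg _) hcc N)
    refine Summable.of_nonneg_of_le (fun n => norm_nonneg _) (fun n => ?_) hssum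
    have hs0 : 0 ≤ sfn n := by
      rw [hsfndef]
      have h1 : (0:ℝ) ≤ ∫ t in Set.Icc (cc*((n:ℝ)-N)) (cc*((n:ℝ)+N)), ‖F t‖ :=
        integral_nonneg fun t => norm_nonneg _
      have h2 : (0:ℝ) ≤ ∫ t in Set.Icc (cc*((n:ℝ)-N)) (cc*((n:ℝ)+N)), ‖F' t‖ :=
        integral_nonneg fun t => norm_nonneg _
      have h3 : (0:ℝ) ≤ (2*cc*N)⁻¹ := by positivity
      nlinarith
    refine (ContinuousMap.norm_le _ hs0).mpr fun xK => ?_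
    obtain ⟨x, hx⟩ := xK
    simp only [ContinuousMap.restrict_apply, ContinuousMap.comp_apply,
      ContinuousMap.coe_addRight, hfLdef, ContinuousMap.coe_mk]
    have hxI := hKsub hx
    have hu_lt : cc*((n:ℝ)-N) < cc*((n:ℝ)+N) := by nlinarith
    have hmem : cc*(x + (n:ℝ)) ∈ Set.Icc (cc*((n:ℝ)-N)) (cc*((n:ℝ)+N)) := by
      constructor
      · have := hxI.1; nlinarith
      · have := hxI.2; nlinarith
    have hsb := PSEaux.sup_bound hder hFc hF'c hu_lt hmem
    rw [hsfndef]
    have he : cc*((n:ℝ)+N) - cc*((n:ℝ)-N) = 2*cc*N := by ring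
    rw [he] at hsb
    exact hsb
  have poisson := Real.tsum_eq_tsum_fourier h_norm h_sum 0
  have e1 : (∑' n : ℤ, F (2 * Real.pi * (n:ℝ) / L)) = ∑' n : ℤ, fL ((0:ℝ) + (n:ℝ)) := by
    apply tsum_congr; intro n
    simp only [hfLdef, ContinuousMap.coe_mk]
    congr 1
    rw [hccdef]
    field_simp
    ring
  have e2 : (∑' n : ℤ, fL ((0:ℝ) + (n:ℝ))) = ∑' m : ℤ, 𝓕 (⇑fL) (m:ℝ) := by
    rw [poisson]
    apply tsum_congr; intro m
    rw [show (((0:ℝ) : UnitAddCircle)) = 0 from QuotientAddGroup.mk_zero _]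
    rw [fourier_eval_zero, mul_one]
  have e3 : (∑' m : ℤ, 𝓕 (⇑fL) (m:ℝ)) = ((cc⁻¹ : ℝ) : ℂ) * ∑' m : ℤ, u m := by
    rw [← tsum_mul_left]
    apply tsum_congr; intro m
    rw [hscale, Complex.real_smul, hudef]
  have hF0 : 𝓕 F 0 = ∫ k, F k := by
    rw [Real.fourier_real_eq_integral_exp_smul]
    simp
  have hu0 : u 0 = ∫ k, F k := by
    simp only [hudef, Int.cast_zero, zero_div]
    exact hF0
  have hsplit := Summable.tsum_eq_add_tsum_ite hSu 0
  have hwsummable : Summable (fun m : ℤ => if m = 0 then 0 else v m) := by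
    refine Summable.of_nonneg_of_le (fun m => ?_) (fun m => ?_) hv
    · split
      · exact le_rfl
      · exact hvnn m
    · split
      · exact hvnn m
      · exact le_rfl
  have hWnorm : ∀ m : ℤ, ‖(if m = 0 then 0 else u m : ℂ)‖ ≤ M * (if m = 0 then 0 else v m) := by
    intro m
    split
    · simp
    · exact hu_le m
  have hWs : Summable fun m : ℤ => ‖(if m = 0 then 0 else u m : ℂ)‖ :=
    Summable.of_nonneg_of_le (fun m => norm_nonneg _) hWnorm (hwsummable.mul_left M)
  have hWbound : ‖∑' m : ℤ, (if m = 0 then 0 else u m : ℂ)‖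
      ≤ M * ∑' m : ℤ, (if m = 0 then 0 else v m) := by
    calc ‖∑' m : ℤ, (if m = 0 then 0 else u m : ℂ)‖
        ≤ ∑' m : ℤ, ‖(if m = 0 then 0 else u m : ℂ)‖ := norm_tsum_le_tsum_norm hWs
      _ ≤ ∑' m : ℤ, M * (if m = 0 then 0 else v m) :=
          Summable.tsum_le_tsum hWnorm hWs (hwsummable.mul_left M)
      _ = M * ∑' m : ℤ, (if m = 0 then 0 else v m) := tsum_mul_left
  have hq1' : (0:ℝ) < 1 - q := by linarith
  have hwsum : (∑' m : ℤ, (if m = 0 then 0 else v m)) = (1-q)⁻¹ + q*(1-q)⁻¹ - 1 := by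
    have h := Summable.tsum_eq_add_tsum_ite hv 0
    have hv0 : v 0 = 1 := by rw [hvdef]; simp
    rw [hvsum, hv0] at h
    linarith
  have hdiff_eq : (1 / (L:ℂ)) * (∑' n : ℤ, F (2 * Real.pi * (n:ℝ) / L))
      - (1 / (2 * Real.pi) : ℂ) * ∫ k, F k
      = (1 / (2 * Real.pi) : ℂ) * ∑' m : ℤ, (if m = 0 then 0 else u m : ℂ) := by
    rw [e1, e2, e3]
    have hLne : (L:ℂ) ≠ 0 := by exact_mod_cast hL0.ne'
    have hπne : ((Real.pi:ℝ):ℂ) ≠ 0 := by exact_mod_cast Real.pi_ne_zero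
    have hLc : (1/(L:ℂ)) * ((cc⁻¹:ℝ):ℂ) = (1 / (2 * Real.pi) : ℂ) := by
      have hccinv : cc⁻¹ = L / (2*Real.pi) := by
        rw [hccdef, inv_div]
      rw [hccinv]
      push_cast
      field_simp
    calc (1/(L:ℂ)) * (((cc⁻¹:ℝ):ℂ) * ∑' m : ℤ, u m) - (1 / (2 * Real.pi) : ℂ) * ∫ k, F k
        = ((1/(L:ℂ)) * ((cc⁻¹:ℝ):ℂ)) * (∑' m : ℤ, u m)
          - (1 / (2 * Real.pi) : ℂ) * ∫ k, F k := by ring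
      _ = (1 / (2 * Real.pi) : ℂ) * ((∑' m : ℤ, u m) - ∫ k, F k) := by rw [hLc]; ring
      _ = (1 / (2 * Real.pi) : ℂ) * ∑' m : ℤ, (if m = 0 then 0 else u m : ℂ) := by
          rw [hsplit, hu0]
          ring
  rw [hdiff_eq, norm_mul]
  have hnorm2π : ‖(1 / (2 * Real.pi) : ℂ)‖ = (2*Real.pi)⁻¹ := by
    rw [norm_div, norm_one, one_div]
    congr 1
    rw [norm_mul]
    simp only [Complex.norm_ofNat, Complex.norm_real, Real.norm_eq_abs]
    rw [abs_of_pos Real.pi_pos]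
  rw [hnorm2π]
  have hqq : (1-q)⁻¹ + q*(1-q)⁻¹ - 1 = 2*q/(1-q) := by
    field_simp
    ring
  have hqb : q ≤ Real.exp (-b*L) := by
    rw [hqdef]
    exact Real.exp_le_exp.2 (by nlinarith)
  have hqβ2 : q ≤ Real.exp (-β) := by
    rw [hqdef]
    exact Real.exp_le_exp.2 (by nlinarith)
  have hden : 0 < 1 - Real.exp (-β) := by
    have h1 : Real.exp (-β) < Real.exp 0 := Real.exp_lt_exp.2 (by linarith)
    rw [Real.exp_zero] at h1
    linarith
  have hE : (0:ℝ) < Real.exp (-b*L) := Real.exp_pos _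
  have hkey : q/(1-q) ≤ Real.exp (-b*L)/(1 - Real.exp (-β)) := by
    rw [div_le_div_iff₀ hq1' hden]
    nlinarith [mul_le_mul_of_nonneg_right hqb hden.le, mul_le_mul_of_nonneg_left hqβ2 hE.le]
  calc (2*Real.pi)⁻¹ * ‖∑' m : ℤ, (if m = 0 then 0 else u m : ℂ)‖
      ≤ (2*Real.pi)⁻¹ * (M * ∑' m : ℤ, (if m = 0 then 0 else v m)) := by
        apply mul_le_mul_of_nonneg_left hWbound (by positivity)
    _ = (2*Real.pi)⁻¹ * (M * (2*q/(1-q))) := by rw [hwsum, hqq]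
    _ = (M/Real.pi) * (q/(1-q)) := by
        field_simp
    _ ≤ (M/Real.pi) * (Real.exp (-b*L)/(1 - Real.exp (-β))) :=
        mul_le_mul_of_nonneg_left hkey (div_nonneg hM0 Real.pi_pos.le)
    _ = (M * (Real.pi * (1 - Real.exp (-β)))⁻¹) * Real.exp (-b*L) := by
        field_simp
end
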